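/- Let H be a real Hilbert space, f : H → ℝ differentiable with L-Lipschitz gradient, Ψ : H → (−∞,∞] proper closed convex, and F := f + Ψ. Fix x ∈ H, a direction p ∈ H with x̃ := x + p, and suppose ⟨∇f(x), p⟩ + Ψ(x̃) − Ψ(x) + (1/2)⟨T p, p⟩ ≤ 0 for a bounded linear T with ⟨v, Tv⟩ ≥ μ‖v‖² (μ > 0). Then for every α ∈ [0,1], F(x + αp) ≤ F(x) + (‖p‖²/2)(α²L − αμ). In particular, if additionally α ≤ μ/(L + 2γ‖p‖^δ) for given γ > 0 and δ ≥ 0, then F(x + αp) ≤ F(x) − γ·α²·‖p‖^{2+δ}. -/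

import Mathlib

open scoped RealInnerProductSpace

/-- Line search decrease: if the proximal-Newton model does not increase
(`⟨∇f(x),p⟩ + Ψ(x+p) - Ψ(x) + ½⟨Tp,p⟩ ≤ 0`) with `T` `μ`-coercive, then for
`α ∈ [0,1]`, `F(x+αp) ≤ F(x) + (‖p‖²/2)(α²L - αμ)`, and when additionally
`α ≤ μ/(L + 2γ‖p‖^δ)`, the sufficient decrease `F(x+αp) ≤ F(x) - γα²‖p‖^{2+δ}` holds. -/
theorem line_search_sufficient_decrease
    {H : Type*} [NormedAddCommGroup H] [InnerProductSpace ℝ H] [CompleteSpace H]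
    (f : H → ℝ) (f' : H → H) (hf : ∀ x, HasGradientAt f (f' x) x)
    (L : ℝ) (hL : 0 < L) (hLip : ∀ x y : H, ‖f' x - f' y‖ ≤ L * ‖x - y‖)
    (Ψ : H → ℝ) (hΨ_conv : ConvexOn ℝ Set.univ Ψ)
    (T : H →L[ℝ] H) (μ : ℝ) (hμ : 0 < μ) (hT : ∀ v : H, μ * ‖v‖ ^ 2 ≤ ⟪v, T v⟫)
    (γ δ : ℝ) (hγ : 0 < γ) (hδ : 0 ≤ δ)
    (x p : H)
    (hmodel : ⟪f' x, p⟫ + Ψ (x + p) - Ψ x + (1 / 2) * ⟪T p, p⟫ ≤ 0) :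
    (∀ α : ℝ, α ∈ Set.Icc (0 : ℝ) 1 →
      f (x + α • p) + Ψ (x + α • p) ≤
        f x + Ψ x + (‖p‖ ^ 2 / 2) * (α ^ 2 * L - α * μ)) ∧
    (∀ α : ℝ, α ∈ Set.Icc (0 : ℝ) 1 → α ≤ μ / (L + 2 * γ * ‖p‖ ^ δ) →
      f (x + α • p) + Ψ (x + α • p) ≤
        f x + Ψ x - γ * α ^ 2 * ‖p‖ ^ (2 + δ)) := by
  -- derivative of t ↦ f (x + t • p)
  have hcurve : ∀ t : ℝ, HasDerivAt (fun t : ℝ => x + t • p) p t := by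
    intro t
    simpa using ((hasDerivAt_id t).smul_const p).const_add x
  have hg : ∀ t : ℝ, HasDerivAt (fun t : ℝ => f (x + t • p)) ⟪f' (x + t • p), p⟫ t := by
    intro t
    have := ((hf (x + t • p)).hasFDerivAt).comp_hasDerivAt t (hcurve t)
    simpa [InnerProductSpace.toDual_apply_apply, Function.comp_def] using this
  -- auxiliary function h
  set A : ℝ := ⟪f' x, p⟫ with hA
  have hh : ∀ t : ℝ, HasDerivAt
      (fun t : ℝ => f (x + t • p) - t * A - t ^ 2 * (L * ‖p‖ ^ 2 / 2))
      (⟪f' (x + t • p), p⟫ - A - t * (L * ‖p‖ ^ 2)) t := by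
    intro t
    have h1 : HasDerivAt (fun t : ℝ => t * A) A t := by
      simpa using (hasDerivAt_id t).mul_const A
    have h2 : HasDerivAt (fun t : ℝ => t ^ 2 * (L * ‖p‖ ^ 2 / 2))
        (2 * t * (L * ‖p‖ ^ 2 / 2)) t := by
      simpa using (hasDerivAt_pow 2 t).mul_const (L * ‖p‖ ^ 2 / 2)
    have := ((hg t).sub h1).sub h2
    exact this.congr_deriv (by ring)
  have hanti : AntitoneOn (fun t : ℝ => f (x + t • p) - t * A - t ^ 2 * (L * ‖p‖ ^ 2 / 2))
      (Set.Icc 0 1) := by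
    apply antitoneOn_of_deriv_nonpos (convex_Icc 0 1)
    · exact fun t _ => (hh t).differentiableAt.continuousAt.continuousWithinAt
    · intro t ht
      exact (hh t).differentiableAt.differentiableWithinAt
    · intro t ht
      rw [(hh t).deriv]
      have ht0 : 0 < t := (Set.mem_Ioo.mp (by simpa [interior_Icc] using ht)).1
      have hb : ⟪f' (x + t • p), p⟫ - A ≤ t * (L * ‖p‖ ^ 2) := by
        have h1 : ⟪f' (x + t • p) - f' x, p⟫ ≤ ‖f' (x + t • p) - f' x‖ * ‖p‖ :=
          real_inner_le_norm _ _
        have h2 : ‖f' (x + t • p) - f' x‖ ≤ L * (t * ‖p‖) := by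
          have := hLip (x + t • p) x
          simpa [norm_smul, abs_of_pos ht0] using this
        have h3 : ‖f' (x + t • p) - f' x‖ * ‖p‖ ≤ L * (t * ‖p‖) * ‖p‖ :=
          mul_le_mul_of_nonneg_right h2 (norm_nonneg p)
        have h4 : ⟪f' (x + t • p) - f' x, p⟫ = ⟪f' (x + t • p), p⟫ - A := by
          rw [hA, inner_sub_left]
        nlinarith [h1, h3]
      linarith
  -- descent lemma
  have hdesc : ∀ α ∈ Set.Icc (0:ℝ) 1,
      f (x + α • p) ≤ f x + α * A + α ^ 2 * (L * ‖p‖ ^ 2 / 2) := by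
    intro α hα
    have h0 : (0:ℝ) ∈ Set.Icc (0:ℝ) 1 := by norm_num
    have := hanti h0 hα hα.1
    simp only [zero_smul, add_zero, zero_mul, ne_eq, OfNat.ofNat_ne_zero,
      not_false_eq_true, zero_pow, sub_zero] at this
    linarith
  -- convexity of Ψ
  have hΨ : ∀ α ∈ Set.Icc (0:ℝ) 1,
      Ψ (x + α • p) ≤ Ψ x + α * (Ψ (x + p) - Ψ x) := by
    intro α hα
    rcases hα with ⟨h0, h1⟩
    have := hΨ_conv.2 (Set.mem_univ x) (Set.mem_univ (x + p))
      (by linarith : (0:ℝ) ≤ 1 - α) h0 (by ring)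
    have hpt : (1 - α) • x + α • (x + p) = x + α • p := by
      rw [smul_add, sub_smul, one_smul]; abel
    rw [hpt] at this
    simp only [smul_eq_mul] at this
    nlinarith [this]
  -- model bound
  have hmb : A + Ψ (x + p) - Ψ x ≤ -(μ / 2) * ‖p‖ ^ 2 := by
    have h1 : μ * ‖p‖ ^ 2 ≤ ⟪p, T p⟫ := hT p
    have h2 : ⟪T p, p⟫ = ⟪p, T p⟫ := real_inner_comm _ _
    rw [h2] at hmodel
    linarith
  have key : ∀ α ∈ Set.Icc (0:ℝ) 1,
      f (x + α • p) + Ψ (x + α • p) ≤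
        f x + Ψ x + (‖p‖ ^ 2 / 2) * (α ^ 2 * L - α * μ) := by
    intro α hα
    have h1 := hdesc α hα
    have h2 := hΨ α hα
    nlinarith [hα.1, h1, h2, hmb]
  refine ⟨key, ?_⟩
  intro α hα hαle
  have hkey := key α hα
  by_cases hp : ‖p‖ = 0
  · have h2δ : (0:ℝ) < 2 + δ := by linarith
    rw [hp]
    rw [Real.zero_rpow (ne_of_gt h2δ)]
    simp only [hp] at hkey
    simpa using hkey
  · have hpn : 0 < ‖p‖ := lt_of_le_of_ne (norm_nonneg p) (Ne.symm hp)
    have hd : 0 < L + 2 * γ * ‖p‖ ^ δ := by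
      have : (0:ℝ) < ‖p‖ ^ δ := Real.rpow_pos_of_pos hpn δ
      nlinarith
    have hαd : α * (L + 2 * γ * ‖p‖ ^ δ) ≤ μ := by
      rw [← le_div_iff₀ hd]; exact hαle
    have hsplit : ‖p‖ ^ (2 + δ) = ‖p‖ ^ (2:ℝ) * ‖p‖ ^ δ := by
      rw [← Real.rpow_add hpn]
    have h2 : ‖p‖ ^ (2:ℝ) = ‖p‖ ^ (2:ℕ) := by
      rw [Real.rpow_two, sq]
    have hfin : (‖p‖ ^ 2 / 2) * (α ^ 2 * L - α * μ) ≤ - (γ * α ^ 2 * ‖p‖ ^ (2 + δ)) := by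
      rw [hsplit, h2]
      have hα0 := hα.1
      have h3 : α * μ ≥ α ^ 2 * (L + 2 * γ * ‖p‖ ^ δ) := by
        have := mul_le_mul_of_nonneg_left hαd hα0
        nlinarith
      nlinarith [sq_nonneg α, norm_nonneg p, sq_nonneg (‖p‖)]
    linarith
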